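/- Plücker coordinates of the twist in the 2×n case: for all i, j ∈ ℤ, det(τ→(A)_i, τ→(A)_j) = det(A_{i+1}, A_{j+1}) / ( det(A_i, A_{i+1}) · det(A_j, A_{j+1}) ). -/

import Mathlib

/-- The determinant `det(x, y)` of the `2×2` matrix with columns `x, y`. -/
noncomputable def det2 (x y : Fin 2 → ℂ) : ℂ := x 0 * y 1 - x 1 * y 0

/-- The standard symmetric bilinear form `⟨x|y⟩ = x₁y₁ + x₂y₂` on `ℂ²`. -/
noncomputable def bil2 (x y : Fin 2 → ℂ) : ℂ := x 0 * y 0 + x 1 * y 1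

/-- `T` is the right twist of the `2×n` matrix `A` (with all cyclically
consecutive `2×2` minors nonzero, so that its `i`-minimal column basis is
`{i, i+1}`): the `i`-th column of `T` is the unique `v ∈ ℂ²` with
`⟨v|A i⟩ = 1` and `⟨v|A (i+1)⟩ = 0`. -/
def IsTwist2 (A T : ℤ → Fin 2 → ℂ) : Prop :=
  ∀ i : ℤ, bil2 (T i) (A i) = 1 ∧ bil2 (T i) (A (i + 1)) = 0

/-- Plücker coordinates of the twist in the `2×n` case:
for all `i, j ∈ ℤ`,
`det(τ→(A) i, τ→(A) j) = det(A (i+1), A (j+1)) / (det(A i, A (i+1)) · det(A j, A (j+1)))`. -/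
theorem twist2_plucker
    (n : ℕ) (hn : 2 ≤ n)
    (A : ℤ → Fin 2 → ℂ) (hper : ∀ a : ℤ, A (a + (n : ℤ)) = A a)
    (hminor : ∀ i : ℤ, det2 (A i) (A (i + 1)) ≠ 0)
    (T : ℤ → Fin 2 → ℂ) (hT : IsTwist2 A T) :
    ∀ i j : ℤ,
      det2 (T i) (T j) =
        det2 (A (i + 1)) (A (j + 1)) /
          (det2 (A i) (A (i + 1)) * det2 (A j) (A (j + 1))) := by
  intro i j
  obtain ⟨h1i, h2i⟩ := hT i
  obtain ⟨h1j, h2j⟩ := hT j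
  have hdi := hminor i
  have hdj := hminor j
  simp only [det2, bil2] at *
  have e1 : T i 0 * (A i 0 * A (i+1) 1 - A i 1 * A (i+1) 0) = A (i+1) 1 := by
    linear_combination A (i+1) 1 * h1i - A i 1 * h2i
  have e2 : T i 1 * (A i 0 * A (i+1) 1 - A i 1 * A (i+1) 0) = -A (i+1) 0 := by
    linear_combination (-A (i+1) 0) * h1i + A i 0 * h2i
  have f1 : T j 0 * (A j 0 * A (j+1) 1 - A j 1 * A (j+1) 0) = A (j+1) 1 := by
    linear_combination A (j+1) 1 * h1j - A j 1 * h2j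
  have f2 : T j 1 * (A j 0 * A (j+1) 1 - A j 1 * A (j+1) 0) = -A (j+1) 0 := by
    linear_combination (-A (j+1) 0) * h1j + A j 0 * h2j
  rw [eq_div_iff (mul_ne_zero hdi hdj)]
  linear_combination (T j 1 * (A j 0 * A (j+1) 1 - A j 1 * A (j+1) 0)) * e1
    - (T j 0 * (A j 0 * A (j+1) 1 - A j 1 * A (j+1) 0)) * e2
    + A (i+1) 1 * f2 + A (i+1) 0 * f1
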